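/- Define φ₁(κ; u) = (1/(2πi)) ∫_{C_<} e^{(w-κ)³/3 - u(w-κ)} (2w)^{-1/2} dw, where C_< is a contour from e^{iπ/3}∞ to a point δ > 0 on the positive real axis and then to e^{-iπ/3}∞, avoiding the branch cut of √(2w) on the negative real axis. Then φ₁ satisfies the third-order linear ODE (in u): φ₁''' - κ(φ₁'' - uφ₁) - uφ₁' - (1/2)φ₁ = 0. -/

import Mathlib

open MeasureTheory

/-- The integrand `F(κ,u;w) = e^{(w-κ)³/3 - u(w-κ)} / √(2w)`. -/
noncomputable def airyIntegrand (κ u : ℝ) (w : ℂ) : ℂ :=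
  Complex.exp ((w - κ)^3/3 - u * (w - κ)) * (2*w) ^ (-(1/2) : ℂ)

/-- `φ₁(κ;u)`: the contour integral of `airyIntegrand` along `C_<`, which goes
from `e^{iπ/3}∞` to `δ > 0` and then to `e^{-iπ/3}∞`, parametrized by the two
rays `δ + t·e^{∓iπ/3}`, `t ∈ (0,∞)`. -/
noncomputable def phi1 (κ δ : ℝ) (u : ℝ) : ℂ :=
  (2 * (Real.pi : ℂ) * Complex.I)⁻¹ *
    ∫ t in Set.Ioi (0:ℝ),
      (airyIntegrand κ u ((δ:ℂ) + t * Complex.exp (-(Real.pi/3 : ℝ) * Complex.I)) *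
          Complex.exp (-(Real.pi/3 : ℝ) * Complex.I)
        - airyIntegrand κ u ((δ:ℂ) + t * Complex.exp ((Real.pi/3 : ℝ) * Complex.I)) *
          Complex.exp ((Real.pi/3 : ℝ) * Complex.I))

namespace Stmt14

open Complex Set Filter Asymptotics

noncomputable def eN : ℂ := Complex.exp (-(Real.pi/3 : ℝ) * Complex.I)
noncomputable def eP : ℂ := Complex.exp ((Real.pi/3 : ℝ) * Complex.I)

/-- Packaged facts about a direction. -/
structure DirFacts (e : ℂ) : Prop where
  habs : ‖e‖ = 1
  hre : e.re = 1/2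
  hsq : (e^2).re = -(1/2)
  hcube : e^3 = -1

lemma dir_facts_exp (θ : ℝ) (hθ : θ = Real.pi/3 ∨ θ = -(Real.pi/3)) :
    DirFacts (Complex.exp ((θ:ℂ) * Complex.I)) := by
  have habs := Complex.norm_exp_ofReal_mul_I θ
  have hre := Complex.exp_ofReal_mul_I_re θ
  have hsq : (Complex.exp ((θ:ℂ) * Complex.I))^2 = Complex.exp (((2*θ:ℝ):ℂ) * Complex.I) := by
    rw [← Complex.exp_nat_mul]; push_cast; ring_nf
  have hcube : (Complex.exp ((θ:ℂ) * Complex.I))^3 = Complex.exp (((3*θ:ℝ):ℂ) * Complex.I) := by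
    rw [← Complex.exp_nat_mul]; push_cast; ring_nf
  have hcos2 : Real.cos (2*(Real.pi/3)) = -(1/2) := by
    have : 2*(Real.pi/3) = Real.pi - Real.pi/3 := by ring
    rw [this, Real.cos_pi_sub, Real.cos_pi_div_three]
  constructor
  · exact habs
  · rw [hre]; rcases hθ with rfl | rfl
    · exact Real.cos_pi_div_three
    · rw [Real.cos_neg]; exact Real.cos_pi_div_three
  · rw [hsq, Complex.exp_ofReal_mul_I_re]
    rcases hθ with rfl | rfl
    · exact hcos2
    · rw [show (2*-(Real.pi/3)) = -(2*(Real.pi/3)) by ring, Real.cos_neg]; exact hcos2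
  · rw [hcube]
    rcases hθ with rfl | rfl
    · rw [show ((3*(Real.pi/3):ℝ):ℂ) = (Real.pi:ℂ) by push_cast; ring]
      exact Complex.exp_pi_mul_I
    · rw [show (((3*-(Real.pi/3)):ℝ):ℂ) * Complex.I = -((Real.pi:ℂ) * Complex.I) by push_cast; ring]
      rw [Complex.exp_neg, Complex.exp_pi_mul_I]
      norm_num

lemma eN_facts : DirFacts eN := by
  have h := dir_facts_exp (-(Real.pi/3)) (Or.inr rfl)
  have : eN = Complex.exp ((((-(Real.pi/3)):ℝ):ℂ) * Complex.I) := by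
    unfold eN; push_cast; ring_nf
  rwa [this]

lemma eP_facts : DirFacts eP := dir_facts_exp (Real.pi/3) (Or.inl rfl)


noncomputable def ww (δ : ℝ) (e : ℂ) (t : ℝ) : ℂ := (δ : ℂ) + t * e

noncomputable def g (κ δ : ℝ) (e : ℂ) (n : ℕ) (u t : ℝ) : ℂ :=
  ((κ : ℂ) - ww δ e t) ^ n * airyIntegrand κ u (ww δ e t) * e

variable {κ δ u M t : ℝ} {e : ℂ} {n : ℕ}

lemma re_ww (he : DirFacts e) : (ww δ e t).re = δ + t/2 := by
  simp [ww, Complex.add_re, Complex.ofReal_re, Complex.mul_re, Complex.ofReal_im, he.hre]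
  ring

lemma re_two_ww_pos (hδ : 0 < δ) (he : DirFacts e) (ht : 0 ≤ t) : 0 < (2 * ww δ e t).re := by
  have : (2 * ww δ e t).re = 2 * (ww δ e t).re := by
    simp [Complex.mul_re]
  rw [this, re_ww he]; linarith

lemma two_ww_slit (hδ : 0 < δ) (he : DirFacts e) (ht : 0 ≤ t) :
    2 * ww δ e t ∈ Complex.slitPlane :=
  Or.inl (re_two_ww_pos hδ he ht)

lemma two_ww_ne_zero (hδ : 0 < δ) (he : DirFacts e) (ht : 0 ≤ t) : 2 * ww δ e t ≠ 0 := by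
  intro h
  have := re_two_ww_pos hδ he ht
  rw [h] at this; simp at this

lemma E_eq (he : DirFacts e) :
    (ww δ e t - κ)^3/3 - (u:ℂ)*(ww δ e t - κ)
      = ((((δ-κ)^3 - t^3)/3 - u*(δ-κ) : ℝ) : ℂ)
        + (((δ-κ)^2*t - u*t : ℝ) : ℂ) * e + (((δ-κ)*t^2 : ℝ) : ℂ) * e^2 := by
  have hw : ww δ e t - κ = (((δ-κ):ℝ):ℂ) + (t:ℂ) * e := by
    unfold ww; push_cast; ring
  rw [hw]; push_cast
  linear_combination (t:ℂ)^3/3 * he.hcube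

lemma E_re (he : DirFacts e) :
    ((ww δ e t - κ)^3/3 - (u:ℂ)*(ww δ e t - κ)).re
      = ((δ-κ)^3 - t^3)/3 - u*(δ-κ) + ((δ-κ)^2*t - u*t)/2 - (δ-κ)*t^2/2 := by
  rw [E_eq he]
  simp only [Complex.add_re, Complex.re_ofReal_mul, Complex.ofReal_re, he.hre, he.hsq]
  ring

/-- The exponential upper bound for the real part of the exponent. -/
noncomputable def psi (κ δ M : ℝ) (t : ℝ) : ℝ :=
  |δ-κ|^3/3 + M*|δ-κ| + ((δ-κ)^2/2 + M/2)*t + |δ-κ|/2*t^2 - t^3/3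

lemma E_re_le (he : DirFacts e) (hu : |u| ≤ M) (ht : 0 ≤ t) :
    ((ww δ e t - κ)^3/3 - (u:ℂ)*(ww δ e t - κ)).re ≤ psi κ δ M t := by
  rw [E_re he]
  unfold psi
  have h1 : (δ-κ)^3 ≤ |δ-κ|^3 := by
    calc (δ-κ)^3 ≤ |(δ-κ)^3| := le_abs_self _
    _ = |δ-κ|^3 := by rw [_root_.abs_pow]
  have h2 : -u*(δ-κ) ≤ M * |δ-κ| := by
    calc -u*(δ-κ) ≤ |(-u)*(δ-κ)| := le_abs_self _
    _ = |u| * |δ-κ| := by rw [abs_mul, abs_neg]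
    _ ≤ M * |δ-κ| := mul_le_mul_of_nonneg_right hu (abs_nonneg _)
  have h3 : -u*t ≤ M*t :=
    mul_le_mul_of_nonneg_right (le_trans (neg_le_abs u) hu) ht
  have h4 : -(δ-κ)*t^2 ≤ |δ-κ| * t^2 :=
    mul_le_mul_of_nonneg_right (neg_le_abs _) (sq_nonneg t)
  linarith
lemma norm_cpow_neg_half (hδ : 0 < δ) (he : DirFacts e) (ht : 0 ≤ t) :
    ‖(2 * ww δ e t) ^ (-(1/2) : ℂ)‖ ≤ (2*δ) ^ (-(1/2) : ℝ) := by
  have hz : 2 * ww δ e t ≠ 0 := two_ww_ne_zero hδ he ht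
  have habs : ‖(2 * ww δ e t) ^ (-(1/2) : ℂ)‖
      = ‖2 * ww δ e t‖ ^ (-(1/2) : ℝ) := by
    rw [Complex.norm_cpow_of_ne_zero hz]
    norm_num
  rw [habs]
  have hle : 2*δ ≤ ‖2 * ww δ e t‖ := by
    calc 2*δ ≤ (2 * ww δ e t).re := by
          have : (2 * ww δ e t).re = 2 * (ww δ e t).re := by simp [Complex.mul_re]
          rw [this, re_ww he]; linarith
    _ ≤ ‖2 * ww δ e t‖ := Complex.re_le_norm _
  have h2δ : (0:ℝ) < 2*δ := by linarith
  rw [Real.rpow_neg (by positivity), Real.rpow_neg h2δ.le]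
  apply inv_anti₀ (Real.rpow_pos_of_pos h2δ _)
  exact Real.rpow_le_rpow h2δ.le hle (by norm_num)

lemma norm_airy_le (hδ : 0 < δ) (he : DirFacts e) (hu : |u| ≤ M) (ht : 0 ≤ t) :
    ‖airyIntegrand κ u (ww δ e t)‖ ≤ (2*δ) ^ (-(1/2) : ℝ) * Real.exp (psi κ δ M t) := by
  unfold airyIntegrand
  rw [norm_mul]
  have h1 : ‖Complex.exp ((ww δ e t - κ)^3/3 - (u:ℂ)*(ww δ e t - κ))‖
      ≤ Real.exp (psi κ δ M t) := by
    rw [Complex.norm_exp]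
    exact Real.exp_le_exp.mpr (E_re_le he hu ht)
  calc ‖Complex.exp ((ww δ e t - ↑κ) ^ 3 / 3 - ↑u * (ww δ e t - ↑κ))‖ * ‖(2 * ww δ e t) ^ (-(1/2) : ℂ)‖
      ≤ Real.exp (psi κ δ M t) * (2*δ) ^ (-(1/2) : ℝ) :=
        mul_le_mul h1 (norm_cpow_neg_half hδ he ht) (norm_nonneg _) (Real.exp_pos _).le
    _ = (2*δ) ^ (-(1/2) : ℝ) * Real.exp (psi κ δ M t) := by ring

/-- Master bound function. -/
noncomputable def bnd (κ δ M : ℝ) (t : ℝ) : ℝ :=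
  (2*δ) ^ (-(1/2) : ℝ) * ((1 + |δ-κ| + t)^4 * Real.exp (psi κ δ M t))

lemma norm_g_le (hδ : 0 < δ) (he : DirFacts e) (hu : |u| ≤ M) (ht : 0 ≤ t) (hn : n ≤ 4) :
    ‖g κ δ e n u t‖ ≤ bnd κ δ M t := by
  unfold g bnd
  rw [norm_mul, norm_mul]
  have he1 : ‖e‖ = 1 := by rw [he.habs]
  have hwk : ‖((κ:ℂ) - ww δ e t) ^ n‖ ≤ (1 + |δ-κ| + t)^4 := by
    rw [norm_pow]
    have hb : ‖(κ:ℂ) - ww δ e t‖ ≤ |δ-κ| + t := by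
      have : (κ:ℂ) - ww δ e t = -((((δ-κ):ℝ):ℂ) + (t:ℂ)*e) := by
        unfold ww; push_cast; ring
      rw [this, norm_neg]
      calc ‖(((δ-κ):ℝ):ℂ) + (t:ℂ)*e‖ ≤ ‖(((δ-κ):ℝ):ℂ)‖ + ‖(t:ℂ)*e‖ := norm_add_le _ _
        _ = |δ-κ| + |t| * 1 := by rw [norm_mul, Complex.norm_real, Complex.norm_real, he1]; simp [Real.norm_eq_abs]
        _ = |δ-κ| + t := by rw [_root_.abs_of_nonneg ht, mul_one]
    calc ‖(κ:ℂ) - ww δ e t‖^n ≤ (1 + |δ-κ| + t)^n := by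
          apply pow_le_pow_left₀ (norm_nonneg _)
          refine le_trans hb (by linarith)
      _ ≤ (1 + |δ-κ| + t)^4 := by
          apply pow_le_pow_right₀ (by linarith [abs_nonneg (δ-κ)]) hn
  calc ‖((κ:ℂ) - ww δ e t) ^ n‖ * ‖airyIntegrand κ u (ww δ e t)‖ * ‖e‖
      ≤ (1 + |δ-κ| + t)^4 * ((2*δ) ^ (-(1/2) : ℝ) * Real.exp (psi κ δ M t)) * 1 := by
        apply mul_le_mul _ (le_of_eq he1) (norm_nonneg _) (by positivity)
        exact mul_le_mul hwk (norm_airy_le hδ he hu ht) (norm_nonneg _) (by positivity)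
    _ = (2*δ) ^ (-(1/2) : ℝ) * ((1 + |δ-κ| + t)^4 * Real.exp (psi κ δ M t)) := by ring
lemma eventually_cubic_le (n : ℕ) (b0 A B C : ℝ) (hb0 : 0 ≤ b0) :
    ∀ᶠ t in atTop, (b0+t)^n * Real.exp (A + B*t + C*t^2 - t^3/3) ≤ Real.exp (-t) := by
  filter_upwards [eventually_ge_atTop (1:ℝ),
    eventually_ge_atTop (3*(|A| + n*b0 + |B| + n + 1 + |C| + 1))] with t h1 hT
  have h0 : (0:ℝ) ≤ t := by linarith
  have hsq : 1 ≤ t^2 := by nlinarith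
  have htsq : t ≤ t^2 := by nlinarith
  have hb : (b0+t)^n ≤ Real.exp ((n:ℝ)*(b0+t)) := by
    calc (b0+t)^n ≤ (Real.exp (b0+t))^n := by
          apply pow_le_pow_left₀ (by linarith)
          linarith [Real.add_one_le_exp (b0+t)]
      _ = Real.exp ((n:ℝ)*(b0+t)) := by rw [← Real.exp_nat_mul]
  calc (b0+t)^n * Real.exp (A + B*t + C*t^2 - t^3/3)
      ≤ Real.exp ((n:ℝ)*(b0+t)) * Real.exp (A + B*t + C*t^2 - t^3/3) := by
        apply mul_le_mul_of_nonneg_right hb (Real.exp_pos _).le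
    _ = Real.exp ((n:ℝ)*(b0+t) + (A + B*t + C*t^2 - t^3/3)) := by rw [← Real.exp_add]
    _ ≤ Real.exp (-t) := by
        apply Real.exp_le_exp.mpr
        have e1 : A ≤ |A| * t^2 := by
          calc A ≤ |A| := le_abs_self A
            _ ≤ |A| * t^2 := le_mul_of_one_le_right (abs_nonneg A) hsq
        have e2 : B*t ≤ |B| * t^2 := by
          calc B*t ≤ |B| * t := mul_le_mul_of_nonneg_right (le_abs_self B) h0
            _ ≤ |B| * t^2 := mul_le_mul_of_nonneg_left htsq (abs_nonneg B)
        have e3 : C*t^2 ≤ |C| * t^2 := mul_le_mul_of_nonneg_right (le_abs_self C) (sq_nonneg t)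
        have e4 : (n:ℝ)*(b0+t) ≤ ((n:ℝ)*b0 + n) * t^2 := by
          have : (n:ℝ)*b0 ≤ (n:ℝ)*b0*t^2 := le_mul_of_one_le_right (by positivity) hsq
          have h' : (n:ℝ)*t ≤ (n:ℝ)*t^2 := mul_le_mul_of_nonneg_left htsq (Nat.cast_nonneg n)
          nlinarith
        have e5 : t ≤ 1 * t^2 := by nlinarith
        have e6 : (|A| + n*b0 + |B| + n + 1 + |C| + 1) * t^2 ≤ t^3/3 := by
          have h3 : (|A| + n*b0 + |B| + n + 1 + |C| + 1) ≤ t/3 := by linarith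
          calc (|A| + n*b0 + |B| + n + 1 + |C| + 1) * t^2 ≤ (t/3) * t^2 :=
                mul_le_mul_of_nonneg_right h3 (sq_nonneg t)
            _ = t^3/3 := by ring
        nlinarith [abs_nonneg A, abs_nonneg B, abs_nonneg C]

lemma cubic_integrable (n : ℕ) (b0 A B C : ℝ) (hb0 : 0 ≤ b0) :
    IntegrableOn (fun t => (b0+t)^n * Real.exp (A + B*t + C*t^2 - t^3/3)) (Ioi (0:ℝ)) := by
  apply integrable_of_isBigO_exp_neg (one_pos) (a := 0)
  · apply Continuous.continuousOn
    exact ((continuous_const.add continuous_id).pow n).mul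
      (Real.continuous_exp.comp (by continuity))
  · rw [Asymptotics.isBigO_iff]
    refine ⟨1, ?_⟩
    filter_upwards [eventually_cubic_le n b0 A B C hb0, eventually_ge_atTop (0:ℝ)] with t h h0
    rw [Real.norm_eq_abs, Real.norm_eq_abs, one_mul,
      _root_.abs_of_nonneg (by positivity), abs_of_pos (Real.exp_pos _)]
    simpa [neg_mul, one_mul] using h

lemma cubic_tendsto (n : ℕ) (b0 A B C : ℝ) (hb0 : 0 ≤ b0) :
    Tendsto (fun t => (b0+t)^n * Real.exp (A + B*t + C*t^2 - t^3/3)) atTop (nhds 0) := by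
  apply squeeze_zero' _ (eventually_cubic_le n b0 A B C hb0) Real.tendsto_exp_neg_atTop_nhds_zero
  filter_upwards [eventually_ge_atTop (0:ℝ)] with t h0
  positivity
lemma bnd_integrable (hδ : 0 < δ) (M : ℝ) : IntegrableOn (bnd κ δ M) (Ioi (0:ℝ)) := by
  have h := (cubic_integrable 4 (1 + |δ-κ|) (|δ-κ|^3/3 + M*|δ-κ|) ((δ-κ)^2/2 + M/2) (|δ-κ|/2)
    (by positivity)).const_mul ((2*δ) ^ (-(1/2) : ℝ))
  have : bnd κ δ M = fun t => (2*δ) ^ (-(1/2) : ℝ) *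
      ((1 + |δ-κ| + t)^4 * Real.exp ((|δ-κ|^3/3 + M*|δ-κ|) + ((δ-κ)^2/2 + M/2)*t + (|δ-κ|/2)*t^2 - t^3/3)) := by
    funext t; unfold bnd psi; ring_nf
  rw [this]
  exact h

lemma continuousOn_g (hδ : 0 < δ) (he : DirFacts e) (n : ℕ) (u : ℝ) :
    ContinuousOn (fun t => g κ δ e n u t) (Ici (0:ℝ)) := by
  intro t ht
  apply ContinuousAt.continuousWithinAt
  have hw : Continuous (ww δ e) := by
    unfold ww; exact continuous_const.add (Complex.continuous_ofReal.mul continuous_const)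
  unfold g airyIntegrand
  apply ContinuousAt.mul
  apply ContinuousAt.mul
  · exact ((continuous_const.sub hw).pow n).continuousAt
  · apply ContinuousAt.mul
    · apply Complex.continuous_exp.continuousAt.comp
      apply ContinuousAt.sub
      · exact (((hw.sub continuous_const).pow 3).div_const 3).continuousAt
      · exact (continuous_const.mul (hw.sub continuous_const)).continuousAt
    · exact ContinuousAt.cpow (continuousAt_const.mul hw.continuousAt)
        continuousAt_const (two_ww_slit hδ he ht)
  · exact continuousAt_const

lemma aesm_g (hδ : 0 < δ) (he : DirFacts e) (n : ℕ) (u : ℝ) :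
    AEStronglyMeasurable (fun t => g κ δ e n u t) (volume.restrict (Ioi (0:ℝ))) :=
  ((continuousOn_g hδ he n u).mono Ioi_subset_Ici_self).aestronglyMeasurable measurableSet_Ioi

lemma integrable_g (hδ : 0 < δ) (he : DirFacts e) (hn : n ≤ 4) (u : ℝ) :
    IntegrableOn (fun t => g κ δ e n u t) (Ioi (0:ℝ)) := by
  apply Integrable.mono' (bnd_integrable hδ |u|) (aesm_g hδ he n u)
  filter_upwards [ae_restrict_mem measurableSet_Ioi] with t ht
  exact norm_g_le hδ he (le_refl _) (le_of_lt ht) hn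

lemma hasDerivAt_g_u (hδ : 0 < δ) (he : DirFacts e) (n : ℕ) (u t : ℝ) :
    HasDerivAt (fun u => g κ δ e n u t) (g κ δ e (n+1) u t) u := by
  set a : ℂ := (ww δ e t - κ)^3/3 with ha
  set b : ℂ := ww δ e t - κ with hb
  set C1 : ℂ := ((κ:ℂ) - ww δ e t) ^ n with hC1
  set C2 : ℂ := (2 * ww δ e t) ^ (-(1/2) : ℂ) with hC2
  have h : HasDerivAt (fun u : ℝ => Complex.exp (a - (u:ℂ)*b)) (Complex.exp (a - (u:ℂ)*b) * (-b)) u := by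
    have hc : HasDerivAt (fun z : ℂ => Complex.exp (a - z*b)) (Complex.exp (a - (u:ℂ)*b) * (-b)) (u:ℂ) := by
      have h1 : HasDerivAt (fun z : ℂ => a - z*b) (-b) (u:ℂ) := by
        simpa using ((hasDerivAt_id ((u:ℂ))).mul_const b).const_sub a
      simpa using h1.cexp
    exact hc.comp_ofReal
  have key : HasDerivAt (fun u : ℝ => C1 * (Complex.exp (a - (u:ℂ)*b) * C2) * e)
      (C1 * (Complex.exp (a - (u:ℂ)*b) * (-b) * C2) * e) u :=
    (((h.mul_const C2).const_mul C1).mul_const e)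
  have hfun : (fun u : ℝ => g κ δ e n u t) = fun u : ℝ => C1 * (Complex.exp (a - (u:ℂ)*b) * C2) * e := by
    funext v; unfold g airyIntegrand; rw [← ha, ← hb, ← hC1, ← hC2]
  rw [hfun]
  convert key using 1
  unfold g airyIntegrand
  rw [← ha, ← hb, ← hC2]
  simp only [hC1, hb, pow_succ]
  ring
/-- The two-ray integral. -/
noncomputable def Phi (κ δ : ℝ) (n : ℕ) (u : ℝ) : ℂ :=
  ∫ t in Ioi (0:ℝ), (g κ δ eN n u t - g κ δ eP n u t)

lemma integrable_gg (hδ : 0 < δ) (hn : n ≤ 4) (u : ℝ) :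
    IntegrableOn (fun t => g κ δ eN n u t - g κ δ eP n u t) (Ioi (0:ℝ)) :=
  (integrable_g hδ eN_facts hn u).sub (integrable_g hδ eP_facts hn u)

lemma hasDerivAt_Phi (hδ : 0 < δ) (hn : n ≤ 3) (u₀ : ℝ) :
    HasDerivAt (Phi κ δ n) (Phi κ δ (n+1) u₀) u₀ := by
  set M : ℝ := |u₀| + 1 with hM
  have hkey := hasDerivAt_integral_of_dominated_loc_of_deriv_le
    (μ := volume.restrict (Ioi (0:ℝ))) (x₀ := u₀) (s := Metric.ball u₀ 1)
    (F := fun u t => g κ δ eN n u t - g κ δ eP n u t)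
    (F' := fun u t => g κ δ eN (n+1) u t - g κ δ eP (n+1) u t)
    (bound := fun t => 2 * bnd κ δ M t)
    (Metric.ball_mem_nhds u₀ one_pos)
    (Eventually.of_forall fun u =>
      (aesm_g hδ eN_facts n u).sub (aesm_g hδ eP_facts n u))
    (integrable_gg hδ (by omega) u₀)
    ((aesm_g hδ eN_facts (n+1) u₀).sub (aesm_g hδ eP_facts (n+1) u₀))
    ?_ ((bnd_integrable hδ M).const_mul 2) ?_
  · exact hkey.2
  · filter_upwards [ae_restrict_mem measurableSet_Ioi] with t ht u hu
    have hu' : |u| ≤ M := by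
      rw [Metric.mem_ball, Real.dist_eq] at hu
      calc |u| = |u₀ + (u - u₀)| := by ring_nf
        _ ≤ |u₀| + |u - u₀| := abs_add_le _ _
        _ ≤ |u₀| + 1 := by linarith
    calc ‖g κ δ eN (n+1) u t - g κ δ eP (n+1) u t‖
        ≤ ‖g κ δ eN (n+1) u t‖ + ‖g κ δ eP (n+1) u t‖ := norm_sub_le _ _
      _ ≤ bnd κ δ M t + bnd κ δ M t := add_le_add
          (norm_g_le hδ eN_facts hu' ht.le (by omega))
          (norm_g_le hδ eP_facts hu' ht.le (by omega))
      _ = 2 * bnd κ δ M t := by ring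
  · filter_upwards with t u _
    exact (hasDerivAt_g_u hδ eN_facts n u t).sub (hasDerivAt_g_u hδ eP_facts n u t)
lemma hasDerivAt_ray (hδ : 0 < δ) (he : DirFacts e) (u : ℝ) (ht : 0 ≤ t) :
    HasDerivAt
      (fun s : ℝ => Complex.exp ((ww δ e s - κ)^3/3 - (u:ℂ)*(ww δ e s - κ)) * (2*ww δ e s)^((1/2):ℂ))
      ((Complex.exp ((ww δ e t - κ)^3/3 - (u:ℂ)*(ww δ e t - κ)) * ((ww δ e t - κ)^2 - (u:ℂ))
            * (2*ww δ e t)^((1/2):ℂ)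
          + Complex.exp ((ww δ e t - κ)^3/3 - (u:ℂ)*(ww δ e t - κ)) * (2*ww δ e t)^(-(1/2):ℂ)) * e)
      t := by
  have hslit : 2*((δ:ℂ) + (t:ℂ)*e) ∈ Complex.slitPlane := two_ww_slit hδ he ht
  have hwz : HasDerivAt (fun z : ℂ => (δ:ℂ) + z*e) e (t:ℂ) := by
    simpa using ((hasDerivAt_id ((t:ℂ))).mul_const e).const_add (δ:ℂ)
  have hwk : HasDerivAt (fun z : ℂ => ((δ:ℂ) + z*e) - (κ:ℂ)) e (t:ℂ) := hwz.sub_const _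
  have hE : HasDerivAt (fun z : ℂ => (((δ:ℂ) + z*e) - κ)^3/3 - (u:ℂ)*(((δ:ℂ) + z*e) - κ))
      ((3*(((δ:ℂ) + (t:ℂ)*e) - κ)^(3-1) * e)/3 - (u:ℂ)*e) (t:ℂ) :=
    ((hwk.pow 3).div_const 3).sub (hwk.const_mul (u:ℂ))
  have hexp := hE.cexp
  have h2w : HasDerivAt (fun z : ℂ => 2*((δ:ℂ) + z*e)) (2*e) (t:ℂ) := hwz.const_mul 2
  have hcp := h2w.cpow_const (c := ((1/2):ℂ)) hslit
  have hmul := (hexp.mul hcp).comp_ofReal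
  have hfun : (fun s : ℝ =>
      Complex.exp ((ww δ e s - κ)^3/3 - (u:ℂ)*(ww δ e s - κ)) * (2*ww δ e s)^((1/2):ℂ))
      = fun y : ℝ => Complex.exp ((((δ:ℂ) + (y:ℂ)*e) - κ)^3/3 - (u:ℂ)*(((δ:ℂ) + (y:ℂ)*e) - κ))
        * (2*((δ:ℂ) + (y:ℂ)*e))^((1/2):ℂ) := by
    funext y; unfold ww; rfl
  rw [hfun]
  refine hmul.congr_deriv ?_
  unfold ww
  rw [show ((1/2):ℂ) - 1 = -(1/2) by norm_num]
  ring

noncomputable def Hfun (κ δ u : ℝ) (t : ℝ) : ℂ :=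
  -(1/2 : ℂ) * (Complex.exp ((ww δ eN t - κ)^3/3 - (u:ℂ)*(ww δ eN t - κ)) * (2*ww δ eN t)^((1/2):ℂ)
    - Complex.exp ((ww δ eP t - κ)^3/3 - (u:ℂ)*(ww δ eP t - κ)) * (2*ww δ eP t)^((1/2):ℂ))

noncomputable def combo (κ δ u : ℝ) (t : ℝ) : ℂ :=
  (g κ δ eN 3 u t - g κ δ eP 3 u t) - (κ:ℂ) * (g κ δ eN 2 u t - g κ δ eP 2 u t)
    - (u:ℂ) * (g κ δ eN 1 u t - g κ δ eP 1 u t)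
    + ((κ:ℂ)*(u:ℂ) - 1/2) * (g κ δ eN 0 u t - g κ δ eP 0 u t)

lemma cpow_split {z : ℂ} (hz : z ≠ 0) : z ^ ((1/2):ℂ) = z * z ^ (-(1/2):ℂ) := by
  conv_lhs => rw [show ((1/2):ℂ) = 1 + (-(1/2)) by norm_num]
  rw [Complex.cpow_add _ _ hz, Complex.cpow_one]

lemma hasDerivAt_Hfun (hδ : 0 < δ) (u : ℝ) (ht : 0 ≤ t) :
    HasDerivAt (Hfun κ δ u) (combo κ δ u t) t := by
  have hN := hasDerivAt_ray (κ := κ) hδ eN_facts u ht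
  have hP := hasDerivAt_ray (κ := κ) hδ eP_facts u ht
  have h := (hN.sub hP).const_mul (-(1/2:ℂ))
  have hfun : Hfun κ δ u = fun s =>
      -(1/2 : ℂ) * (Complex.exp ((ww δ eN s - κ)^3/3 - (u:ℂ)*(ww δ eN s - κ)) * (2*ww δ eN s)^((1/2):ℂ)
        - Complex.exp ((ww δ eP s - κ)^3/3 - (u:ℂ)*(ww δ eP s - κ)) * (2*ww δ eP s)^((1/2):ℂ)) := rfl
  rw [hfun]
  refine h.congr_deriv ?_
  unfold combo g airyIntegrand
  rw [cpow_split (two_ww_ne_zero hδ eN_facts ht), cpow_split (two_ww_ne_zero hδ eP_facts ht)]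
  ring

lemma Hfun_zero : Hfun κ δ u 0 = 0 := by
  have h : ww δ eN 0 = ww δ eP 0 := by unfold ww; simp
  unfold Hfun; rw [h]; ring

lemma norm_ray_term_le (hδ : 0 < δ) (he : DirFacts e) (u : ℝ) (ht : 0 ≤ t) :
    ‖Complex.exp ((ww δ e t - κ)^3/3 - (u:ℂ)*(ww δ e t - κ)) * (2*ww δ e t)^((1/2):ℂ)‖
      ≤ (1 + (2*δ + 2*t)) * Real.exp (psi κ δ |u| t) := by
  rw [norm_mul]
  have h1 : ‖Complex.exp ((ww δ e t - κ)^3/3 - (u:ℂ)*(ww δ e t - κ))‖ ≤ Real.exp (psi κ δ |u| t) := by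
    rw [Complex.norm_exp]
    exact Real.exp_le_exp.mpr (E_re_le he (le_refl _) ht)
  have habs : ‖(2*ww δ e t)^((1/2):ℂ)‖ = ‖2*ww δ e t‖ ^ ((1/2) : ℝ) := by
    rw [Complex.norm_cpow_of_ne_zero (two_ww_ne_zero hδ he ht)]
    norm_num
  have hwabs : ‖2*ww δ e t‖ ≤ 2*δ + 2*t := by
    rw [norm_mul]
    have : ‖ww δ e t‖ ≤ δ + t := by
      unfold ww
      calc ‖(δ:ℂ) + (t:ℂ)*e‖ ≤ ‖(δ:ℂ)‖ + ‖(t:ℂ)*e‖ :=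
            norm_add_le _ _
        _ = |δ| + |t| * 1 := by rw [norm_mul, Complex.norm_real, Complex.norm_real, he.habs, Real.norm_eq_abs, Real.norm_eq_abs]
        _ = δ + t := by rw [_root_.abs_of_nonneg hδ.le, _root_.abs_of_nonneg ht, mul_one]
    calc ‖(2:ℂ)‖ * ‖ww δ e t‖ ≤ 2 * (δ + t) := by
          rw [Complex.norm_two]
          exact mul_le_mul_of_nonneg_left this (by norm_num)
      _ = 2*δ + 2*t := by ring
  have h2 : ‖(2*ww δ e t)^((1/2):ℂ)‖ ≤ 1 + (2*δ + 2*t) := by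
    rw [habs, ← Real.sqrt_eq_rpow]
    have hs : Real.sqrt ‖2*ww δ e t‖ ≤ Real.sqrt ((1 + (2*δ+2*t))^2) := by
      apply Real.sqrt_le_sqrt
      nlinarith [norm_nonneg (2*ww δ e t)]
    rwa [Real.sqrt_sq (by positivity)] at hs
  calc ‖Complex.exp ((ww δ e t - κ)^3/3 - (u:ℂ)*(ww δ e t - κ))‖ * ‖(2*ww δ e t)^((1/2):ℂ)‖
      ≤ Real.exp (psi κ δ |u| t) * (1 + (2*δ + 2*t)) :=
        mul_le_mul h1 h2 (norm_nonneg _) (Real.exp_pos _).le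
    _ = (1 + (2*δ + 2*t)) * Real.exp (psi κ δ |u| t) := by ring

lemma tendsto_Hfun (hδ : 0 < δ) (u : ℝ) : Tendsto (Hfun κ δ u) atTop (nhds 0) := by
  rw [tendsto_zero_iff_norm_tendsto_zero]
  have htend : Tendsto (fun t => (1 + (2*δ + 2*t)) * Real.exp (psi κ δ |u| t)) atTop (nhds 0) := by
    have h := (cubic_tendsto 1 ((1+2*δ)/2) (|δ-κ|^3/3 + |u| * |δ-κ|) ((δ-κ)^2/2 + |u|/2) (|δ-κ|/2)
      (by positivity)).const_mul (2:ℝ)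
    have heq : (fun t => (1 + (2*δ + 2*t)) * Real.exp (psi κ δ |u| t))
        = fun t => 2*(((1+2*δ)/2 + t)^1 *
          Real.exp ((|δ-κ|^3/3 + |u| * |δ-κ|) + ((δ-κ)^2/2 + |u|/2)*t + (|δ-κ|/2)*t^2 - t^3/3)) := by
      funext t; unfold psi; ring
    rw [heq]
    simpa using h
  apply squeeze_zero' _ _ htend
  · filter_upwards with t; exact norm_nonneg _
  · filter_upwards [eventually_ge_atTop (0:ℝ)] with t ht
    unfold Hfun
    rw [norm_mul]
    calc ‖(-(1/2):ℂ)‖ * ‖_ - _‖ ≤ (1/2) * (((1 + (2*δ + 2*t)) * Real.exp (psi κ δ |u| t))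
          + ((1 + (2*δ + 2*t)) * Real.exp (psi κ δ |u| t))) := by
          apply mul_le_mul
          · rw [norm_neg]; norm_num
          · exact le_trans (norm_sub_le _ _)
              (add_le_add (norm_ray_term_le hδ eN_facts u ht) (norm_ray_term_le hδ eP_facts u ht))
          · exact norm_nonneg _
          · norm_num
      _ = (1 + (2*δ + 2*t)) * Real.exp (psi κ δ |u| t) := by ring

lemma integrable_combo (hδ : 0 < δ) (u : ℝ) : IntegrableOn (combo κ δ u) (Ioi (0:ℝ)) := by
  unfold combo
  exact (((integrable_gg hδ (by omega) u).sub
      ((integrable_gg hδ (by omega) u).const_mul ((κ:ℂ)))).sub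
      ((integrable_gg hδ (by omega) u).const_mul ((u:ℂ)))).add
      ((integrable_gg hδ (by omega) u).const_mul ((κ:ℂ)*(u:ℂ) - 1/2))

lemma integral_combo (hδ : 0 < δ) (u : ℝ) : ∫ t in Ioi (0:ℝ), combo κ δ u t = 0 := by
  have h := MeasureTheory.integral_Ioi_of_hasDerivAt_of_tendsto' (a := 0)
    (f := Hfun κ δ u) (f' := combo κ δ u)
    (fun t ht => hasDerivAt_Hfun hδ u ht) (integrable_combo hδ u) (tendsto_Hfun hδ u)
  rw [h, Hfun_zero]
  ring

lemma Phi_combo (hδ : 0 < δ) (u : ℝ) :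
    Phi κ δ 3 u - (κ:ℂ) * Phi κ δ 2 u - (u:ℂ) * Phi κ δ 1 u
      + ((κ:ℂ)*(u:ℂ) - 1/2) * Phi κ δ 0 u = 0 := by
  have h := integral_combo (κ := κ) hδ u
  unfold combo at h
  have i3 : IntegrableOn (fun t => g κ δ eN 3 u t - g κ δ eP 3 u t) (Ioi (0:ℝ)) :=
    integrable_gg hδ (by omega) u
  have i2 : IntegrableOn (fun t => (κ:ℂ) * (g κ δ eN 2 u t - g κ δ eP 2 u t)) (Ioi (0:ℝ)) :=
    (integrable_gg hδ (by omega) u).const_mul _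
  have i1 : IntegrableOn (fun t => (u:ℂ) * (g κ δ eN 1 u t - g κ δ eP 1 u t)) (Ioi (0:ℝ)) :=
    (integrable_gg hδ (by omega) u).const_mul _
  have i0 : IntegrableOn (fun t => ((κ:ℂ)*(u:ℂ) - 1/2) * (g κ δ eN 0 u t - g κ δ eP 0 u t))
      (Ioi (0:ℝ)) := (integrable_gg hδ (by omega) u).const_mul _
  have i32 : IntegrableOn (fun t => (g κ δ eN 3 u t - g κ δ eP 3 u t)
      - (κ:ℂ) * (g κ δ eN 2 u t - g κ δ eP 2 u t)) (Ioi (0:ℝ)) := i3.sub i2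
  have i321 : IntegrableOn (fun t => (g κ δ eN 3 u t - g κ δ eP 3 u t)
      - (κ:ℂ) * (g κ δ eN 2 u t - g κ δ eP 2 u t)
      - (u:ℂ) * (g κ δ eN 1 u t - g κ δ eP 1 u t)) (Ioi (0:ℝ)) := i32.sub i1
  rw [MeasureTheory.integral_add i321 i0, MeasureTheory.integral_sub i32 i1,
    MeasureTheory.integral_sub i3 i2, MeasureTheory.integral_const_mul,
    MeasureTheory.integral_const_mul, MeasureTheory.integral_const_mul] at h
  unfold Phi
  linear_combination h

lemma phi1_eq (κ δ : ℝ) :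
    phi1 κ δ = fun u => (2 * (Real.pi : ℂ) * Complex.I)⁻¹ * Phi κ δ 0 u := by
  funext u
  unfold phi1 Phi g ww eN eP
  simp only [pow_zero, one_mul]

end Stmt14

open Stmt14 Set

/-- `φ₁` satisfies the third-order linear ODE
`φ₁''' - κ(φ₁'' - uφ₁) - uφ₁' - (1/2)φ₁ = 0`. -/
theorem stmt14 (κ δ : ℝ) (hδ : 0 < δ) (u : ℝ) :
    iteratedDeriv 3 (phi1 κ δ) u
      - κ * (iteratedDeriv 2 (phi1 κ δ) u - u * phi1 κ δ u)
      - u * deriv (phi1 κ δ) u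
      - (1/2) * phi1 κ δ u = 0 := by
  set c0 : ℂ := (2 * (Real.pi : ℂ) * Complex.I)⁻¹ with hc0
  have hd1 : deriv (phi1 κ δ) = fun u => c0 * Phi κ δ 1 u := by
    funext v
    rw [phi1_eq]
    exact ((hasDerivAt_Phi hδ (by omega) v).const_mul c0).deriv
  have hd2 : deriv (fun u => c0 * Phi κ δ 1 u) = fun u => c0 * Phi κ δ 2 u := by
    funext v
    exact ((hasDerivAt_Phi hδ (by omega) v).const_mul c0).deriv
  have hd3 : deriv (fun u => c0 * Phi κ δ 2 u) = fun u => c0 * Phi κ δ 3 u := by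
    funext v
    exact ((hasDerivAt_Phi hδ (by omega) v).const_mul c0).deriv
  have e2 : iteratedDeriv 2 (phi1 κ δ) = fun u => c0 * Phi κ δ 2 u := by
    rw [iteratedDeriv_succ, iteratedDeriv_one, hd1, hd2]
  have e3 : iteratedDeriv 3 (phi1 κ δ) = fun u => c0 * Phi κ δ 3 u := by
    rw [iteratedDeriv_succ, e2, hd3]
  rw [e3, e2, hd1, phi1_eq]
  linear_combination c0 * Phi_combo (κ := κ) hδ u
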